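/- f(t) → ∞ as t → ∞. (Since f'' > 0 forces f' to increase, boundedness of f would make f'' bounded below by a positive constant, contradicting f' < 1.) -/

import Mathlib

/-- `f(t) → ∞` as `t → ∞`. -/
theorem shaYang_f_tendsto_atTop (α : ℝ) (hα : 0 < α) (f : ℝ → ℝ)
    (hf : ContDiff ℝ 2 f) (hf0 : f 0 = 1) (hf'0 : deriv f 0 = 0)
    (hfpos : ∀ t ≥ (0 : ℝ), 0 < f t)
    (hode : ∀ t ≥ (0 : ℝ), deriv (deriv f) t = (α / 2) * (f t) ^ (-α - 1)) :
    Filter.Tendsto f Filter.atTop Filter.atTop := by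
  have hf2 : ContDiff ℝ ((1:ℕ∞) + 1) f := by exact_mod_cast hf
  obtain ⟨hdf, hcdf⟩ := contDiff_succ_iff_deriv.mp hf2
  have hdf' : Differentiable ℝ (deriv f) := hcdf.2.differentiable (by simp)
  -- deriv f is strictly monotone on [0, ∞)
  have hmono : StrictMonoOn (deriv f) (Set.Ici 0) := by
    apply strictMonoOn_of_deriv_pos (convex_Ici 0) (hdf'.continuous.continuousOn)
    intro t ht
    rw [interior_Ici] at ht
    rw [hode t (le_of_lt ht)]
    have := hfpos t (le_of_lt ht)
    positivity
  set c := deriv f 1 with hc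
  have hcpos : 0 < c := by
    have := hmono (Set.self_mem_Ici) (by norm_num : (1:ℝ) ∈ Set.Ici (0:ℝ)) one_pos
    rwa [hf'0] at this
  -- f t - c * t is monotone on [1, ∞)
  have hg : MonotoneOn (fun t => f t - c * t) (Set.Ici 1) := by
    apply monotoneOn_of_deriv_nonneg (convex_Ici 1)
    · exact (hdf.continuous.sub (continuous_const.mul continuous_id)).continuousOn
    · intro t ht
      exact ((hdf t).sub ((differentiable_const c).mul differentiable_id t)).differentiableWithinAt
    · intro t ht
      rw [interior_Ici] at ht
      have hd : deriv (fun t => f t - c * t) t = deriv f t - c := by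
        have h := ((hdf t).hasDerivAt.sub (((hasDerivAt_id t).const_mul c)))
        exact h.deriv.trans (by ring)
      rw [hd, sub_nonneg]
      rcases eq_or_lt_of_le (le_of_lt (Set.mem_Ioi.mp ht)) with h | h
      · rw [← h]
      · exact le_of_lt (hmono (by norm_num : (1:ℝ) ∈ Set.Ici (0:ℝ))
          (Set.mem_Ici.mpr (by linarith)) h)
  have hbound : ∀ᶠ t in Filter.atTop, c * t + (f 1 - c) ≤ f t := by
    filter_upwards [Filter.eventually_ge_atTop (1:ℝ)] with t ht
    have := hg (Set.self_mem_Ici) (Set.mem_Ici.mpr ht) ht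
    simp only at this
    linarith
  have hlin : Filter.Tendsto (fun t => c * t + (f 1 - c)) Filter.atTop Filter.atTop :=
    (Filter.tendsto_atTop_atTop_of_monotone' (fun a b hab => by nlinarith)
      (by
        rintro ⟨M, hM⟩
        have h1 := hM (Set.mem_range_self ((M - (f 1 - c) + 1) / c))
        have : c * ((M - (f 1 - c) + 1) / c) = M - (f 1 - c) + 1 := by
          field_simp
        rw [this] at h1
        linarith))
  exact Filter.tendsto_atTop_mono' _ hbound hlin
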